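/- Columns of the weighted SRD matrix sum to one: define the n × n matrix A^wght by A_{ii} = α_i, A_{ij} = β_i / N_j for j ∈ M_i^- and A_{ij} = 0 otherwise, where α_i = 1 − (1/N_i) ∑_{j ∈ W_i^-} β_j. Then every column of A^wght sums to 1, i.e. eᵀ A^wght = eᵀ. -/

import Mathlib

open Finset

/-- **Columns of the weighted SRD matrix sum to one.**
With neighborhoods `M i ∋ i`, dual sets `W j = {i | j ∈ M i}`, overlap
counts `N j = |W j|`, per-cell weights `β i`, and
`α i = 1 − (1/N i) ∑ j ∈ W i \ {i}, β j`, define the matrix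
`A i j = α i` if `i = j`, `A i j = β i / N j` if `j ∈ M i \ {i}`, and
`A i j = 0` otherwise.  Then every column of `A` sums to `1`,
i.e. `eᵀ A = eᵀ`. -/
theorem srd_weighted_matrix_columns_sum_to_one
    {ι : Type*} [Fintype ι] [DecidableEq ι]
    (M : ι → Finset ι) (hMself : ∀ i, i ∈ M i)
    (W : ι → Finset ι) (hW : ∀ j, W j = univ.filter (fun i => j ∈ M i))
    (N : ι → ℕ) (hN : ∀ j, N j = (W j).card)
    (β : ι → ℝ)
    (α : ι → ℝ)
    (hα : ∀ i, α i = 1 - (1 / (N i : ℝ)) * ∑ j ∈ (W i).erase i, β j)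
    (A : Matrix ι ι ℝ)
    (hA : ∀ i j, A i j =
      if i = j then α i
      else if j ∈ M i then β i / (N j : ℝ)
      else 0) :
    ∀ j, ∑ i, A i j = 1 := by
  intro j
  have hjW : j ∈ W j := by rw [hW]; simp [hMself j]
  have hNj : (N j : ℝ) ≠ 0 := by
    rw [hN]
    exact_mod_cast Finset.card_ne_zero_of_mem hjW
  have hsplit : ∑ i, A i j = (∑ i ∈ univ.erase j, A i j) + A j j :=
    (Finset.sum_erase_add _ _ (mem_univ j)).symm
  have herase : (W j).erase j = (univ.erase j).filter (fun i => j ∈ M i) := by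
    rw [hW]
    ext i
    simp [and_comm]
  have hrest : ∑ i ∈ univ.erase j, A i j
      = ∑ i ∈ (W j).erase j, β i / (N j : ℝ) := by
    rw [herase, Finset.sum_filter]
    refine Finset.sum_congr rfl fun i hi => ?_
    rw [hA, if_neg (Finset.ne_of_mem_erase hi)]
  have hdiag : A j j = α j := by rw [hA]; simp
  rw [hsplit, hrest, hdiag, hα, ← Finset.sum_div]
  field_simp
  ring
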